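/- Let n₀ ≥ 1 and, for a parameter a in a punctured neighborhood of 0 ∈ ℝ², let Q_a(z) = Σ_{j,n=1}^{n₀} M_{j,n}(a) z_j \overline{z_n} be a Hermitian quadratic form on ℂ^{n₀} (so M_{j,n}(a) = \overline{M_{n,j}(a)}). Assume: there exist γ > 0, σ : a ↦ σ(a) ≥ 0 with σ(a) = O(|a|^{2γ}), and μ : a ↦ μ(a) ∈ ℝ with μ(a) = O(1) as |a| → 0, such that (i) M_{n₀,n₀}(a) = σ(a)μ(a); (ii) for all j < n₀, M_{j,j}(a) → M_j < 0 as |a| → 0; (iii) for all j < n₀, M_{j,n₀}(a) = O(|a|^γ √σ(a)); (iv) for j, n < n₀ with j ≠ n, M_{j,n}(a) = O(|a|^{2γ}); (v) there exists M ∈ ℕ with |a|^{(2+M)γ} = o(σ(a)). Then max over z ∈ ℂ^{n₀} with ‖z‖ = 1 of Q_a(z) equals σ(a)(μ(a) + o(1)) as |a| → 0. -/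

import Mathlib

open Filter Topology Asymptotics Finset

set_option maxHeartbeats 4000000

theorem max_hermitian_quadratic_form_asymptotics
    (N : ℕ) (γ : ℝ) (hγ : 0 < γ)
    (M : EuclideanSpace ℝ (Fin 2) → Fin (N+1) → Fin (N+1) → ℂ)
    (σ μ : EuclideanSpace ℝ (Fin 2) → ℝ) (Mlim : Fin (N+1) → ℝ)
    (hherm : ∀ a j n, M a j n = (starRingEnd ℂ) (M a n j))
    (hσ0 : ∀ a, 0 ≤ σ a)
    (hσO : σ =O[𝓝[≠] (0 : EuclideanSpace ℝ (Fin 2))] fun a => ‖a‖ ^ (2*γ))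
    (hμO : μ =O[𝓝[≠] (0 : EuclideanSpace ℝ (Fin 2))] fun _ => (1:ℝ))
    (hlast : ∀ a, M a (Fin.last N) (Fin.last N) = ((σ a * μ a : ℝ) : ℂ))
    (hdiag : ∀ j : Fin (N+1), j ≠ Fin.last N → Mlim j < 0 ∧
      Tendsto (fun a => M a j j) (𝓝[≠] (0 : EuclideanSpace ℝ (Fin 2)))
        (𝓝 ((Mlim j : ℝ) : ℂ)))
    (hcross : ∀ j : Fin (N+1), j ≠ Fin.last N →
      (fun a => M a j (Fin.last N)) =O[𝓝[≠] (0 : EuclideanSpace ℝ (Fin 2))]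
        fun a => ‖a‖ ^ γ * Real.sqrt (σ a))
    (hoff : ∀ j n : Fin (N+1), j ≠ Fin.last N → n ≠ Fin.last N → j ≠ n →
      (fun a => M a j n) =O[𝓝[≠] (0 : EuclideanSpace ℝ (Fin 2))]
        fun a => ‖a‖ ^ (2*γ))
    (hhigher : ∃ Mnat : ℕ,
      (fun a => ‖a‖ ^ ((2 + (Mnat:ℝ)) * γ)) =o[𝓝[≠] (0 : EuclideanSpace ℝ (Fin 2))] σ) :
    (fun a => sSup {x : ℝ | ∃ z : Fin (N+1) → ℂ, (∑ j, ‖z j‖^2) = 1 ∧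
        x = (∑ j, ∑ n, M a j n * z j * (starRingEnd ℂ) (z n)).re}
      - σ a * μ a)
      =o[𝓝[≠] (0 : EuclideanSpace ℝ (Fin 2))] σ := by
  clear hhigher
  set l := 𝓝[≠] (0 : EuclideanSpace ℝ (Fin 2)) with hl
  set L := Fin.last N with hLdef
  have normconj : ∀ w : ℂ, ‖(starRingEnd ℂ) w‖ = ‖w‖ := fun w => by
    rw [Complex.norm_conj]
  have hne : (Finset.univ : Finset (Fin (N+1))).Nonempty := ⟨L, mem_univ _⟩
  -- the constant c
  obtain ⟨c, hcdef⟩ : ∃ c : ℝ, c = Finset.univ.inf' hne (fun j => if j = L then 1 else -Mlim j / 2) :=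
    ⟨_, rfl⟩
  have hc0 : 0 < c := by
    rw [hcdef, Finset.lt_inf'_iff]
    intro j _
    by_cases hj : j = L
    · rw [if_pos hj]; norm_num
    · rw [if_neg hj]; linarith [(hdiag j hj).1]
  have hcle : ∀ j : Fin (N+1), j ≠ L → c ≤ -Mlim j / 2 := by
    intro j hj
    have h := Finset.inf'_le (fun j => if j = L then 1 else -Mlim j / 2)
      (Finset.mem_univ j)
    rw [if_neg hj] at h
    rw [hcdef]
    exact h
  -- constants C1
  have h1 : ∀ j : Fin (N+1), ∃ C : ℝ, 0 ≤ C ∧ ∀ᶠ a in l, j ≠ L →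
      ‖M a j L‖ ≤ C * (‖a‖ ^ γ * Real.sqrt (σ a)) := by
    intro j
    by_cases hj : j = L
    · exact ⟨0, le_refl 0, Eventually.of_forall (fun a h => absurd hj h)⟩
    · obtain ⟨C, hC⟩ := (hcross j hj).bound
      refine ⟨|C|, abs_nonneg C, hC.mono (fun a ha _ => ?_)⟩
      have hg : (0:ℝ) ≤ ‖a‖ ^ γ * Real.sqrt (σ a) := by positivity
      calc ‖M a j L‖ ≤ C * ‖‖a‖ ^ γ * Real.sqrt (σ a)‖ := ha
        _ ≤ |C| * (‖a‖ ^ γ * Real.sqrt (σ a)) := by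
            rw [Real.norm_of_nonneg hg]
            exact mul_le_mul_of_nonneg_right (le_abs_self C) hg
  choose C1f hC1f0 hC1f using h1
  obtain ⟨C1, hC1def⟩ : ∃ C1 : ℝ, C1 = Finset.univ.sup' hne C1f := ⟨_, rfl⟩
  have hC10 : 0 ≤ C1 := hC1def ▸ le_trans (hC1f0 L) (Finset.le_sup' C1f (mem_univ L))
  have hC1le : ∀ j, C1f j ≤ C1 := fun j => hC1def ▸ Finset.le_sup' C1f (mem_univ j)
  -- constants C2
  have h2 : ∀ p : Fin (N+1) × Fin (N+1), ∃ C : ℝ, 0 ≤ C ∧ ∀ᶠ a in l,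
      p.1 ≠ L → p.2 ≠ L → p.1 ≠ p.2 → ‖M a p.1 p.2‖ ≤ C * ‖a‖ ^ (2*γ) := by
    rintro ⟨j, n⟩
    by_cases hj : j ≠ L ∧ n ≠ L ∧ j ≠ n
    · obtain ⟨C, hC⟩ := (hoff j n hj.1 hj.2.1 hj.2.2).bound
      refine ⟨|C|, abs_nonneg C, hC.mono (fun a ha _ _ _ => ?_)⟩
      have hg : (0:ℝ) ≤ ‖a‖ ^ (2*γ) := by positivity
      calc ‖M a j n‖ ≤ C * ‖‖a‖ ^ (2*γ)‖ := ha
        _ ≤ |C| * ‖a‖ ^ (2*γ) := by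
            rw [Real.norm_of_nonneg hg]
            exact mul_le_mul_of_nonneg_right (le_abs_self C) hg
    · exact ⟨0, le_refl 0, Eventually.of_forall (fun a ha hb hcc => absurd ⟨ha, hb, hcc⟩ hj)⟩
  choose C2f hC2f0 hC2f using h2
  have hne2 : (Finset.univ : Finset (Fin (N+1) × Fin (N+1))).Nonempty := ⟨(L,L), mem_univ _⟩
  obtain ⟨C2, hC2def⟩ : ∃ C2 : ℝ, C2 = Finset.univ.sup' hne2 C2f := ⟨_, rfl⟩
  have hC20 : 0 ≤ C2 := hC2def ▸ le_trans (hC2f0 (L,L)) (Finset.le_sup' C2f (mem_univ _))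
  have hC2le : ∀ p, C2f p ≤ C2 := fun p => hC2def ▸ Finset.le_sup' C2f (mem_univ p)
  -- C3
  obtain ⟨C3', hC3'⟩ := hμO.bound
  obtain ⟨C3, hC3def⟩ : ∃ C3 : ℝ, C3 = max C3' 0 := ⟨_, rfl⟩
  have hEμ : ∀ᶠ a in l, |μ a| ≤ C3 := by
    filter_upwards [hC3'] with a ha
    rw [Real.norm_eq_abs, norm_one, mul_one] at ha
    exact ha.trans (hC3def ▸ le_max_left _ _)
  -- tendsto facts
  have hnorm : Tendsto (fun a : EuclideanSpace ℝ (Fin 2) => ‖a‖) l (𝓝 0) :=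
    tendsto_norm_zero.comp (tendsto_id.mono_left nhdsWithin_le_nhds)
  have hRt : Tendsto (fun a : EuclideanSpace ℝ (Fin 2) => ‖a‖ ^ (2*γ)) l (𝓝 0) := by
    have hcont : ContinuousAt (fun x : ℝ => x ^ (2*γ)) 0 :=
      Real.continuousAt_rpow_const 0 (2*γ) (Or.inr (by positivity))
    have h0 : (0:ℝ) ^ (2*γ) = 0 := Real.zero_rpow (by positivity)
    have h := hcont.tendsto.comp hnorm
    rw [h0] at h
    exact h
  have hσt : Tendsto σ l (𝓝 0) := hσO.trans_tendsto hRt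
  -- global constants
  obtain ⟨K1, hK1def⟩ : ∃ K1 : ℝ, K1 = ((N:ℝ)+1)^2 * C1 := ⟨_, rfl⟩
  obtain ⟨K2, hK2def⟩ : ∃ K2 : ℝ, K2 = ((N:ℝ)+1)^2 * C2 := ⟨_, rfl⟩
  have hK10 : 0 ≤ K1 := by rw [hK1def]; positivity
  have hK20 : 0 ≤ K2 := by rw [hK2def]; positivity
  -- eventual bounds independent of ε
  have hEdiag : ∀ᶠ a in l, ∀ j, j ≠ L → (M a j j).re ≤ -c := by
    rw [Filter.eventually_all]
    intro j
    by_cases hj : j = L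
    · exact Eventually.of_forall fun a h => absurd hj h
    · have hlt : (0:ℝ) < -Mlim j / 2 := by linarith [(hdiag j hj).1]
      have hev := Metric.tendsto_nhds.mp (hdiag j hj).2 (-Mlim j/2) hlt
      filter_upwards [hev] with a ha _
      have h1 : (M a j j).re - Mlim j ≤ ‖M a j j - (Mlim j : ℂ)‖ := by
        calc (M a j j).re - Mlim j = (M a j j - (Mlim j:ℂ)).re := by simp
          _ ≤ ‖M a j j - (Mlim j:ℂ)‖ := Complex.re_le_norm _
          _ = ‖M a j j - (Mlim j:ℂ)‖ := rfl
      rw [dist_eq_norm] at ha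
      have h2 := hcle j hj
      linarith
  have hEc1 : ∀ᶠ a in l, ∀ j, j ≠ L → ‖M a j L‖ ≤ C1 * (‖a‖ ^ γ * Real.sqrt (σ a)) := by
    rw [Filter.eventually_all]
    intro j
    filter_upwards [hC1f j] with a ha hj
    exact (ha hj).trans (mul_le_mul_of_nonneg_right (hC1le j) (by positivity))
  have hEc2 : ∀ᶠ a in l, ∀ p : Fin (N+1) × Fin (N+1), p.1 ≠ L → p.2 ≠ L → p.1 ≠ p.2 →
      ‖M a p.1 p.2‖ ≤ C2 * ‖a‖ ^ (2*γ) := by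
    rw [Filter.eventually_all]
    intro p
    filter_upwards [hC2f p] with a ha h1 h2 h3
    exact (ha h1 h2 h3).trans
      (mul_le_mul_of_nonneg_right (hC2le p) (Real.rpow_nonneg (norm_nonneg a) _))
  have hE5 : ∀ᶠ a in l, σ a * C3 ≤ c/4 := by
    have ht : Tendsto (fun a => σ a * C3) l (𝓝 0) := by
      have := hσt.mul_const C3
      rwa [zero_mul] at this
    exact ht.eventually_le_const (by linarith)
  have hE6 : ∀ᶠ a in l, K2 * ‖a‖ ^ (2*γ) ≤ c/4 := by
    have ht : Tendsto (fun a : EuclideanSpace ℝ (Fin 2) => K2 * ‖a‖ ^ (2*γ)) l (𝓝 0) := by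
      have := hRt.const_mul K2
      rwa [mul_zero] at this
    exact ht.eventually_le_const (by linarith)
  -- main
  rw [isLittleO_iff]
  intro ε hε
  have hE7 : ∀ᶠ a in l, K1^2 * ‖a‖ ^ (2*γ) ≤ 2*c*ε := by
    have ht : Tendsto (fun a : EuclideanSpace ℝ (Fin 2) => K1^2 * ‖a‖ ^ (2*γ)) l (𝓝 0) := by
      have := hRt.const_mul (K1^2)
      rwa [mul_zero] at this
    exact ht.eventually_le_const (by positivity)
  filter_upwards [hEdiag, hEc1, hEc2, hEμ, hE5, hE6, hE7, eventually_mem_nhdsWithin]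
    with a hdiaga hc1a hc2a hμa h5a h6a h7a ha0'
  have ha0 : a ≠ 0 := ha0'
  have hna : (0:ℝ) < ‖a‖ := norm_pos_iff.mpr ha0
  have hra0 : (0:ℝ) ≤ ‖a‖ ^ γ := Real.rpow_nonneg (norm_nonneg a) γ
  have hRa0 : (0:ℝ) ≤ ‖a‖ ^ (2*γ) := Real.rpow_nonneg (norm_nonneg a) _
  have hrr : ‖a‖ ^ (2*γ) = ‖a‖ ^ γ * ‖a‖ ^ γ := by
    rw [show (2:ℝ)*γ = γ + γ by ring, Real.rpow_add hna]
  -- the key bound for unit vectors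
  have key : ∀ z : Fin (N+1) → ℂ, (∑ j, ‖z j‖^2) = 1 →
      (∑ j, ∑ n, M a j n * z j * (starRingEnd ℂ) (z n)).re ≤ σ a * μ a + ε * σ a := by
    intro z hz1
    obtain ⟨t, htdef⟩ : ∃ t : ℝ, t = ∑ j ∈ Finset.univ.erase L, ‖z j‖^2 := ⟨_, rfl⟩
    have ht0 : 0 ≤ t := htdef ▸ Finset.sum_nonneg (fun j _ => by positivity)
    obtain ⟨s, hsdef⟩ : ∃ s : ℝ, s = Real.sqrt t := ⟨_, rfl⟩
    have hs0 : 0 ≤ s := hsdef ▸ Real.sqrt_nonneg t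
    have hst : s^2 = t := hsdef ▸ Real.sq_sqrt ht0
    have ht1 : ‖z L‖^2 + t = 1 := by
      rw [htdef, ← hz1]
      exact Finset.add_sum_erase Finset.univ (fun j => ‖z j‖^2) (mem_univ L)
    have hzL : ‖z L‖ ≤ 1 := by nlinarith [norm_nonneg (z L)]
    have hzj : ∀ j, j ≠ L → ‖z j‖ ≤ s := by
      intro j hj
      have hle : ‖z j‖^2 ≤ t := by
        rw [htdef]
        exact Finset.single_le_sum (f := fun j => ‖z j‖^2) (fun i _ => by positivity)
          (Finset.mem_erase.mpr ⟨hj, mem_univ j⟩)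
      calc ‖z j‖ = Real.sqrt (‖z j‖^2) := (Real.sqrt_sq (norm_nonneg _)).symm
        _ ≤ s := hsdef ▸ Real.sqrt_le_sqrt hle
    have hsqσ0 : (0:ℝ) ≤ Real.sqrt (σ a) := Real.sqrt_nonneg _
    have hA0 : (0:ℝ) ≤ C1 * (‖a‖ ^ γ * Real.sqrt (σ a)) :=
      mul_nonneg hC10 (mul_nonneg hra0 hsqσ0)
    have hB0 : (0:ℝ) ≤ C2 * ‖a‖ ^ (2*γ) := mul_nonneg hC20 hRa0
    have hslack1 : 0 ≤ C1 * (‖a‖ ^ γ * Real.sqrt (σ a)) * s := mul_nonneg hA0 hs0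
    have hslack2 : 0 ≤ C2 * ‖a‖ ^ (2*γ) * t := mul_nonneg hB0 ht0
    set d : Fin (N+1) → Fin (N+1) → ℝ := fun j n =>
      if j = n then (if j = L then σ a * μ a * ‖z L‖^2 else -c * ‖z j‖^2) else 0 with hddef
    have hdLL : d L L = σ a * μ a * ‖z L‖ ^ 2 := by simp [hddef]
    have hdjj : ∀ j, j ≠ L → d j j = -c * ‖z j‖^2 := fun j hj => by simp [hddef, hj]
    have hdne : ∀ j n, j ≠ n → d j n = 0 := fun j n h => by simp [hddef, h]
    have key2 : ∀ j n, (M a j n * z j * (starRingEnd ℂ) (z n)).re ≤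
        d j n + (C1 * (‖a‖ ^ γ * Real.sqrt (σ a)) * s + C2 * ‖a‖ ^ (2*γ) * t) := by
      intro j n
      by_cases hjn : j = n
      · subst hjn
        by_cases hjL : j = L
        · subst hjL
          have heq : (M a L L * z L * (starRingEnd ℂ) (z L)).re = σ a * μ a * ‖z L‖^2 := by
            rw [hlast a, mul_assoc, Complex.mul_conj, ← Complex.ofReal_mul,
              Complex.ofReal_re, Complex.normSq_eq_norm_sq]
          rw [heq, hdLL]
          linarith
        · have hre : (M a j j * z j * (starRingEnd ℂ) (z j)).re = (M a j j).re * ‖z j‖^2 := by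
            rw [mul_assoc, Complex.mul_conj,
              show ‖z j‖^2 = Complex.normSq (z j) from by
                rw [Complex.sq_norm]]
            simp [Complex.mul_re]
          rw [hre, hdjj j hjL]
          have h1 : (M a j j).re * ‖z j‖^2 ≤ -c * ‖z j‖^2 :=
            mul_le_mul_of_nonneg_right (hdiaga j hjL) (by positivity)
          linarith
      · have habs : (M a j n * z j * (starRingEnd ℂ) (z n)).re ≤ ‖M a j n‖ * ‖z j‖ * ‖z n‖ := by
          calc (M a j n * z j * (starRingEnd ℂ) (z n)).re
              ≤ ‖M a j n * z j * (starRingEnd ℂ) (z n)‖ := Complex.re_le_norm _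
            _ = ‖M a j n * z j * (starRingEnd ℂ) (z n)‖ := rfl
            _ = ‖M a j n‖ * ‖z j‖ * ‖z n‖ := by rw [norm_mul, norm_mul, normconj]
        have hd0 : d j n = 0 := hdne j n hjn
        by_cases hnL : n = L
        · have hjL : j ≠ L := by rw [hnL] at hjn; exact hjn
          have hM : ‖M a j n‖ ≤ C1 * (‖a‖ ^ γ * Real.sqrt (σ a)) := by
            rw [hnL]; exact hc1a j hjL
          have step1 : ‖M a j n‖ * ‖z j‖ ≤ C1 * (‖a‖ ^ γ * Real.sqrt (σ a)) * s :=
            mul_le_mul hM (hzj j hjL) (norm_nonneg _) hA0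
          have step2 : ‖M a j n‖ * ‖z j‖ * ‖z n‖ ≤ C1 * (‖a‖ ^ γ * Real.sqrt (σ a)) * s * 1 :=
            mul_le_mul step1 (hnL ▸ hzL) (norm_nonneg _) (mul_nonneg hA0 hs0)
          rw [hd0]
          nlinarith
        · by_cases hjL : j = L
          · have hnL' : n ≠ L := hnL
            have hM : ‖M a j n‖ ≤ C1 * (‖a‖ ^ γ * Real.sqrt (σ a)) := by
              rw [hherm a j n, normconj, hjL]
              exact hc1a n hnL'
            have step1 : ‖M a j n‖ * ‖z j‖ ≤ C1 * (‖a‖ ^ γ * Real.sqrt (σ a)) * 1 :=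
              mul_le_mul hM (hjL ▸ hzL) (norm_nonneg _) hA0
            have step2 : ‖M a j n‖ * ‖z j‖ * ‖z n‖ ≤ C1 * (‖a‖ ^ γ * Real.sqrt (σ a)) * 1 * s :=
              mul_le_mul step1 (hzj n hnL') (norm_nonneg _) (mul_nonneg hA0 zero_le_one)
            rw [hd0]
            nlinarith
          · have hM : ‖M a j n‖ ≤ C2 * ‖a‖ ^ (2*γ) := hc2a (j, n) hjL hnL hjn
            have step1 : ‖M a j n‖ * ‖z j‖ ≤ C2 * ‖a‖ ^ (2*γ) * s :=
              mul_le_mul hM (hzj j hjL) (norm_nonneg _) hB0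
            have step2 : ‖M a j n‖ * ‖z j‖ * ‖z n‖ ≤ C2 * ‖a‖ ^ (2*γ) * s * s :=
              mul_le_mul step1 (hzj n hnL) (norm_nonneg _) (mul_nonneg hB0 hs0)
            have hss : s * s = t := by nlinarith
            rw [hd0]
            nlinarith
    -- sum up
    have hdsum : (∑ j, ∑ n, d j n) = σ a * μ a * ‖z L‖^2 - c * t := by
      have h1 : ∀ j : Fin (N+1), (∑ n, d j n) =
          if j = L then σ a * μ a * ‖z L‖^2 else -c * ‖z j‖^2 := by
        intro j
        rw [← Finset.add_sum_erase Finset.univ (fun n => d j n) (mem_univ j)]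
        rw [Finset.sum_eq_zero (fun n hn => hdne j n (Ne.symm (Finset.mem_erase.mp hn).1))]
        by_cases hj : j = L
        · rw [add_zero, if_pos hj, hj, hdLL]
        · rw [add_zero, if_neg hj, hdjj j hj]
      rw [Finset.sum_congr rfl (fun j _ => h1 j),
        ← Finset.add_sum_erase _ _ (mem_univ L), if_pos rfl]
      have h2 : (∑ j ∈ Finset.univ.erase L,
          (if j = L then σ a * μ a * ‖z L‖^2 else -c * ‖z j‖^2)) =
          ∑ j ∈ Finset.univ.erase L, -c * ‖z j‖^2 :=
        Finset.sum_congr rfl (fun j hj => if_neg (Finset.mem_erase.mp hj).1)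
      rw [h2, ← Finset.mul_sum, ← htdef]
      ring
    have hsum : (∑ j, ∑ n, M a j n * z j * (starRingEnd ℂ) (z n)).re ≤
        σ a * μ a * ‖z L‖^2 - c * t +
          ((N:ℝ)+1)^2 * (C1 * (‖a‖ ^ γ * Real.sqrt (σ a)) * s + C2 * ‖a‖ ^ (2*γ) * t) := by
      rw [Complex.re_sum]
      calc (∑ j, (∑ n, M a j n * z j * (starRingEnd ℂ) (z n)).re)
          = ∑ j, ∑ n, (M a j n * z j * (starRingEnd ℂ) (z n)).re :=
            Finset.sum_congr rfl (fun j _ => Complex.re_sum _ _)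
        _ ≤ ∑ j, ∑ n, (d j n +
              (C1 * (‖a‖ ^ γ * Real.sqrt (σ a)) * s + C2 * ‖a‖ ^ (2*γ) * t)) :=
            Finset.sum_le_sum (fun j _ => Finset.sum_le_sum (fun n _ => key2 j n))
        _ = (∑ j, ∑ n, d j n) + ((N:ℝ)+1)^2 *
              (C1 * (‖a‖ ^ γ * Real.sqrt (σ a)) * s + C2 * ‖a‖ ^ (2*γ) * t) := by
            rw [Finset.sum_congr rfl (fun j (_ : j ∈ Finset.univ) =>
              (Finset.sum_add_distrib (s := Finset.univ) (f := fun n => d j n)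
                (g := fun _ => C1 * (‖a‖ ^ γ * Real.sqrt (σ a)) * s + C2 * ‖a‖ ^ (2*γ) * t)))]
            rw [Finset.sum_add_distrib]
            congr 1
            simp only [Finset.sum_const, Finset.card_univ, Fintype.card_fin, nsmul_eq_mul]
            push_cast
            ring
        _ = σ a * μ a * ‖z L‖^2 - c * t + ((N:ℝ)+1)^2 *
              (C1 * (‖a‖ ^ γ * Real.sqrt (σ a)) * s + C2 * ‖a‖ ^ (2*γ) * t) := by
            rw [hdsum]
    -- conclude
    have hzL2 : ‖z L‖^2 = 1 - t := by linarith
    rw [hzL2] at hsum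
    have hB2 : (K1 * (‖a‖ ^ γ * Real.sqrt (σ a)))^2 ≤ 2*c*ε*σ a := by
      have h6 : Real.sqrt (σ a) * Real.sqrt (σ a) = σ a := Real.mul_self_sqrt (hσ0 a)
      have e1 : (K1 * (‖a‖ ^ γ * Real.sqrt (σ a)))^2 =
          (K1^2 * (‖a‖ ^ γ * ‖a‖ ^ γ)) * (Real.sqrt (σ a) * Real.sqrt (σ a)) := by ring
      rw [e1, ← hrr, h6]
      exact mul_le_mul_of_nonneg_right h7a (hσ0 a)
    have hmain : -(c/2)*t + (K1 * (‖a‖ ^ γ * Real.sqrt (σ a)))*s ≤ ε * σ a := by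
      rw [← hst]
      nlinarith [sq_nonneg (c*s - K1 * (‖a‖ ^ γ * Real.sqrt (σ a))), hB2, hc0]
    have hμ2 : -(σ a * μ a * t) ≤ σ a * C3 * t := by
      have hm := (abs_le.mp hμa).1
      nlinarith [mul_nonneg (hσ0 a) ht0]
    have h5t : σ a * C3 * t ≤ c/4 * t := mul_le_mul_of_nonneg_right h5a ht0
    have h6t : K2 * ‖a‖ ^ (2*γ) * t ≤ c/4 * t := mul_le_mul_of_nonneg_right h6a ht0
    calc (∑ j, ∑ n, M a j n * z j * (starRingEnd ℂ) (z n)).re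
        ≤ σ a * μ a * (1 - t) - c * t + ((N:ℝ)+1)^2 *
            (C1 * (‖a‖ ^ γ * Real.sqrt (σ a)) * s + C2 * ‖a‖ ^ (2*γ) * t) := hsum
      _ = σ a * μ a - σ a * μ a * t - c * t +
            K1 * (‖a‖ ^ γ * Real.sqrt (σ a)) * s + K2 * ‖a‖ ^ (2*γ) * t := by
          rw [hK1def, hK2def]; ring
      _ ≤ σ a * μ a + ε * σ a := by linarith
  -- membership of σμ
  have hmem : σ a * μ a ∈ {x : ℝ | ∃ z : Fin (N+1) → ℂ, (∑ j, ‖z j‖^2) = 1 ∧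
      x = (∑ j, ∑ n, M a j n * z j * (starRingEnd ℂ) (z n)).re} := by
    refine ⟨fun j => if j = L then 1 else 0, ?_, ?_⟩
    · have h1 : ∀ j : Fin (N+1), ‖(if j = L then (1:ℂ) else 0)‖^2 =
          if j = L then (1:ℝ) else 0 := by
        intro j; by_cases hj : j = L <;> simp [hj]
      calc (∑ j, ‖(if j = L then (1:ℂ) else 0)‖^2)
          = ∑ j, (if j = L then (1:ℝ) else 0) := Finset.sum_congr rfl (fun j _ => h1 j)
        _ = 1 := by rw [Finset.sum_ite_eq' Finset.univ L (fun _ => (1:ℝ))]; simp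
    · have h2 : (∑ j, ∑ n, M a j n * (if j = L then (1:ℂ) else 0) *
          (starRingEnd ℂ) (if n = L then (1:ℂ) else 0)) = M a L L := by
        have hinner : ∀ j : Fin (N+1), (∑ n, M a j n * (if j = L then (1:ℂ) else 0) *
            (starRingEnd ℂ) (if n = L then (1:ℂ) else 0)) =
            if j = L then M a j L else 0 := by
          intro j
          by_cases hj : j = L <;>
            simp [hj, apply_ite (starRingEnd ℂ), mul_ite, Finset.sum_ite_eq']
        rw [Finset.sum_congr rfl (fun j _ => hinner j),
          Finset.sum_ite_eq' Finset.univ L (fun j => M a j L)]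
        simp
      rw [h2, hlast a, Complex.ofReal_re]
  set Pset := {x : ℝ | ∃ z : Fin (N+1) → ℂ, (∑ j, ‖z j‖^2) = 1 ∧
      x = (∑ j, ∑ n, M a j n * z j * (starRingEnd ℂ) (z n)).re} with hPdef
  have hbdd : ∀ x ∈ Pset, x ≤ σ a * μ a + ε * σ a := by
    rintro x ⟨z, hz, rfl⟩
    exact key z hz
  have hle : sSup Pset ≤ σ a * μ a + ε * σ a := csSup_le ⟨_, hmem⟩ hbdd
  have hge : σ a * μ a ≤ sSup Pset := le_csSup ⟨σ a * μ a + ε * σ a, hbdd⟩ hmem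
  rw [Real.norm_eq_abs, Real.norm_of_nonneg (hσ0 a), abs_le]
  constructor
  · nlinarith [hσ0 a, hε.le]
  · linarith
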